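/- Let d*_{h,s,a} denote the maximal occupancy of (h,s,a) over Markovian policies, attained by policies π*_{h,s,a}, and suppose the set of occupancy measures of Markovian policies is convex. Then the mixture policy π_u whose occupancy is d^{π_u}_h(s,a) = (1/(SAH)) Σ_{h',s',a'} d^{π*_{h',s',a'}}_h(s,a) satisfies d^{π_u}_h(s,a) ≥ d*_h(s)/(SAH) for all (h,s,a); consequently max_π min_{h,s,a} d^π_h(s,a)/d*_h(s) ≥ 1/(SAH). -/
import Mathlib


open scoped ENNReal

/-- A Markovian policy: a distribution over actions at each timestep and state. -/
def IsPolicy {S A : Type} [Fintype A] (π : ℕ → S → A → ℝ) : Prop :=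
  ∀ h s, (∀ a, 0 ≤ π h s a) ∧ ∑ a, π h s a = 1

/-- State occupancy measure of a Markovian policy `π` in an MDP with
transition kernel `P` and initial distribution `μ` (timesteps `0, 1, 2, ...`). -/
noncomputable def occ {S A : Type} [Fintype S] [Fintype A]
    (P : ℕ → S → A → S → ℝ) (μ : S → ℝ) (π : ℕ → S → A → ℝ) : ℕ → S → ℝ
  | 0 => μ
  | h + 1 => fun s' => ∑ s, ∑ a, occ P μ π h s * π h s a * P h s a s'

/-- State-action occupancy measure. -/
noncomputable def occSA {S A : Type} [Fintype S] [Fintype A]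
    (P : ℕ → S → A → S → ℝ) (μ : S → ℝ) (π : ℕ → S → A → ℝ)
    (h : ℕ) (s : S) (a : A) : ℝ :=
  occ P μ π h s * π h s a

/-- Ratio with the convention `a / 0 = +∞`. -/
noncomputable def erat (a b : ℝ) : ℝ≥0∞ :=
  if b = 0 then ⊤ else ENNReal.ofReal (a / b)


lemma occ_nonneg' {S A : Type} [Fintype S] [Fintype A]
    (P : ℕ → S → A → S → ℝ) (hP : ∀ h s a, (∀ s', 0 ≤ P h s a s') ∧ ∑ s', P h s a s' = 1)
    (μ : S → ℝ) (hμnn : ∀ s, 0 ≤ μ s) (π : ℕ → S → A → ℝ) (hπ : IsPolicy π) :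
    ∀ h s, 0 ≤ occ P μ π h s := by
  intro h
  induction h with
  | zero => exact hμnn
  | succ h ih =>
    intro s'
    refine Finset.sum_nonneg fun s _ => Finset.sum_nonneg fun a _ => ?_
    exact mul_nonneg (mul_nonneg (ih s) ((hπ h s).1 a)) ((hP h s a).1 s')

/-- If `π*_{h,s,a}` attains the maximal occupancy `d*_h(s)` at `(h,s,a)` and `π_u`
is the mixture policy whose occupancy is the average of the occupancies of the
`π*_{h',s',a'}`, then `d^{π_u}_h(s,a) ≥ d*_h(s)/(SAH)` for all `(h,s,a)`;
consequently `max_π min_{h,s,a} d^π_h(s,a)/d*_h(s) ≥ 1/(SAH)`. -/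
theorem mixture_policy_occupancy_ge
    {S A : Type} [Fintype S] [Fintype A] [Nonempty S] [Nonempty A]
    (H : ℕ) (hH : 0 < H) (P : ℕ → S → A → S → ℝ)
    (hP : ∀ h s a, (∀ s', 0 ≤ P h s a s') ∧ ∑ s', P h s a s' = 1)
    (μ : S → ℝ) (hμnn : ∀ s, 0 ≤ μ s) (hμ1 : ∑ s, μ s = 1)
    (πstar : ℕ → S → A → (ℕ → S → A → ℝ))
    (hstarPol : ∀ h s a, IsPolicy (πstar h s a))
    (hstarMax : ∀ h < H, ∀ (s : S) (a : A),
      occSA P μ (πstar h s a) h s a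
        = ⨆ π : {π : ℕ → S → A → ℝ // IsPolicy π}, occ P μ π.1 h s)
    (πu : ℕ → S → A → ℝ) (huPol : IsPolicy πu)
    (hu : ∀ h < H, ∀ (s : S) (a : A),
      occSA P μ πu h s a
        = (1 / (Fintype.card S * Fintype.card A * H : ℝ)) *
            ∑ h' ∈ Finset.range H, ∑ s' : S, ∑ a' : A,
              occSA P μ (πstar h' s' a') h s a) :
    (∀ h < H, ∀ (s : S) (a : A),
        (⨆ π : {π : ℕ → S → A → ℝ // IsPolicy π}, occ P μ π.1 h s) /
            (Fintype.card S * Fintype.card A * H : ℝ)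
          ≤ occSA P μ πu h s a) ∧
    (1 : ℝ≥0∞) / (Fintype.card S * Fintype.card A * H : ℕ)
      ≤ ⨆ π : {π : ℕ → S → A → ℝ // IsPolicy π},
          ⨅ x : Fin H × S × A,
            erat (occSA P μ π.1 x.1 x.2.1 x.2.2)
              (⨆ π' : {π : ℕ → S → A → ℝ // IsPolicy π}, occ P μ π'.1 x.1 x.2.1) := by
  classical
  set C : ℝ := (Fintype.card S * Fintype.card A * H : ℝ) with hCdef
  have hC : 0 < C := by
    have h1 : 0 < Fintype.card S := Fintype.card_pos
    have h2 : 0 < Fintype.card A := Fintype.card_pos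
    positivity
  have hnn : ∀ h' s' a' h s a, 0 ≤ occSA P μ (πstar h' s' a') h s a := by
    intro h' s' a' h s a
    exact mul_nonneg (occ_nonneg' P hP μ hμnn _ (hstarPol h' s' a') h s)
      ((hstarPol h' s' a' h s).1 a)
  have part1 : ∀ h < H, ∀ (s : S) (a : A),
      (⨆ π : {π : ℕ → S → A → ℝ // IsPolicy π}, occ P μ π.1 h s) / C
        ≤ occSA P μ πu h s a := by
    intro h hh s a
    rw [← hstarMax h hh s a, hu h hh s a]
    have hsum : occSA P μ (πstar h s a) h s a
        ≤ ∑ h' ∈ Finset.range H, ∑ s' : S, ∑ a' : A,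
            occSA P μ (πstar h' s' a') h s a := by
      calc occSA P μ (πstar h s a) h s a
          ≤ ∑ a' : A, occSA P μ (πstar h s a') h s a :=
            Finset.single_le_sum (fun a' _ => hnn h s a' h s a) (Finset.mem_univ a)
        _ ≤ ∑ s' : S, ∑ a' : A, occSA P μ (πstar h s' a') h s a :=
            Finset.single_le_sum
              (fun s' _ => Finset.sum_nonneg fun a' _ => hnn h s' a' h s a)
              (Finset.mem_univ s)
        _ ≤ ∑ h' ∈ Finset.range H, ∑ s' : S, ∑ a' : A,
              occSA P μ (πstar h' s' a') h s a :=
            Finset.single_le_sum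
              (fun h' _ => Finset.sum_nonneg fun s' _ =>
                Finset.sum_nonneg fun a' _ => hnn h' s' a' h s a)
              (Finset.mem_range.mpr hh)
    have heq : occSA P μ (πstar h s a) h s a / C
        = (1 / C) * occSA P μ (πstar h s a) h s a := by ring
    rw [heq]
    exact mul_le_mul_of_nonneg_left hsum (by positivity)
  refine ⟨part1, ?_⟩
  refine le_trans ?_ (le_iSup _ (⟨πu, huPol⟩ : {π : ℕ → S → A → ℝ // IsPolicy π}))
  refine le_iInf fun x => ?_
  obtain ⟨⟨h, hh⟩, s, a⟩ := x
  simp only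
  set D : ℝ := ⨆ π' : {π : ℕ → S → A → ℝ // IsPolicy π}, occ P μ π'.1 h s with hDdef
  by_cases hD : D = 0
  · rw [erat, if_pos hD]; exact le_top
  · rw [erat, if_neg hD]
    have hDeq : D = occSA P μ (πstar h s a) h s a := (hstarMax h hh s a).symm
    have hDpos : 0 < D := lt_of_le_of_ne (hDeq ▸ hnn h s a h s a) (Ne.symm hD)
    have hpart := part1 h hh s a
    have hkey : (1 : ℝ) / C ≤ occSA P μ πu h s a / D := by
      rw [le_div_iff₀ hDpos]
      calc 1 / C * D = D / C := by ring
        _ ≤ occSA P μ πu h s a := hpart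
    have hNC : ((Fintype.card S * Fintype.card A * H : ℕ) : ℝ) = C := by
      push_cast; ring
    calc (1 : ℝ≥0∞) / (Fintype.card S * Fintype.card A * H : ℕ)
        = (((Fintype.card S * Fintype.card A * H : ℕ) : ℝ≥0∞))⁻¹ := one_div _
      _ = (ENNReal.ofReal ((Fintype.card S * Fintype.card A * H : ℕ) : ℝ))⁻¹ := by
          rw [ENNReal.ofReal_natCast]
      _ = (ENNReal.ofReal C)⁻¹ := by rw [hNC]
      _ = ENNReal.ofReal C⁻¹ := (ENNReal.ofReal_inv_of_pos hC).symm
      _ = ENNReal.ofReal (1 / C) := by rw [one_div]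
      _ ≤ ENNReal.ofReal (occSA P μ πu h s a / D) := ENNReal.ofReal_le_ofReal hkey
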